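/- Let σ be a nonempty, superadditive solution on the space of all games with σ(0) = {0}, which is positive (for every nonnegative totally monotone game v, every x ∈ σ(v) has nonnegative coordinates). Then σ is single-valued and the induced map 𝒢(N) → ℝ^N is linear over ℝ. -/

import Mathlib

open Finset Pointwise

def TotallyMonotone {N : Type*} [DecidableEq N] (v : Finset N → ℝ) : Prop :=
  ∀ (k : ℕ), 2 ≤ k → ∀ A : Fin k → Finset N,
    ∑ I ∈ ((univ : Finset (Fin k)).powerset.filter Finset.Nonempty).attach,
        (-1 : ℝ) ^ (I.1.card + 1) * v (I.1.inf' (Finset.mem_filter.mp I.2).2 A)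
      ≤ v (univ.sup A)

/-! ### Auxiliary lemmas -/

lemma sum_pow_real {α : Type*} [DecidableEq α] (T : Finset α) :
    ∑ J ∈ T.powerset, (-1 : ℝ) ^ J.card = if T = ∅ then 1 else 0 := by
  have h := Finset.sum_powerset_neg_one_pow_card (x := T)
  have : ∑ J ∈ T.powerset, (-1 : ℝ) ^ J.card
      = ((∑ J ∈ T.powerset, (-1 : ℤ) ^ J.card : ℤ) : ℝ) := by
    push_cast; rfl
  rw [this, h]
  split <;> simp

/-- unanimity game -/
noncomputable def uniG {N : Type*} [DecidableEq N] (S : Finset N) : Finset N → ℝ :=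
  fun A => if S ⊆ A ∧ S.Nonempty then 1 else 0

/-- Möbius coefficient -/
noncomputable def mobG {N : Type*} [DecidableEq N] (v : Finset N → ℝ) (S : Finset N) : ℝ :=
  ∑ B ∈ S.powerset, (-1 : ℝ) ^ (S.card - B.card) * v B

lemma uniG_nonneg {N : Type*} [DecidableEq N] (S A : Finset N) : 0 ≤ uniG S A := by
  unfold uniG; split <;> norm_num

lemma uniG_empty {N : Type*} [DecidableEq N] (S : Finset N) : uniG S ∅ = 0 := by
  unfold uniG
  rw [if_neg]
  rintro ⟨h1, h2⟩
  exact h2.ne_empty (Finset.subset_empty.mp h1)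

lemma uniG_tm {N : Type*} [DecidableEq N] (S : Finset N) : TotallyMonotone (uniG S) := by
  intro k hk A
  by_cases hS : S.Nonempty
  · classical
    set T : Finset (Fin k) := (univ : Finset (Fin k)).filter (fun i => S ⊆ A i) with hT
    set P : Finset (Finset (Fin k)) :=
      (univ : Finset (Fin k)).powerset.filter Finset.Nonempty with hP
    have hval : ∀ (J : Finset (Fin k)) (hJ : J.Nonempty),
        uniG S (J.inf' hJ A) = if J ⊆ T then 1 else 0 := by
      intro J hJ
      by_cases h : J ⊆ T
      · rw [if_pos h]
        unfold uniG
        rw [if_pos]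
        exact ⟨Finset.le_inf' hJ A fun i hi => (Finset.mem_filter.mp (h hi)).2, hS⟩
      · rw [if_neg h]
        unfold uniG
        rw [if_neg]
        rintro ⟨hsub, -⟩
        exact h fun i hi => Finset.mem_filter.mpr
          ⟨Finset.mem_univ _, le_trans hsub (Finset.inf'_le A hi)⟩
    have step1 : ∑ I ∈ P.attach,
          (-1 : ℝ) ^ (I.1.card + 1) * uniG S (I.1.inf' (Finset.mem_filter.mp I.2).2 A)
        = ∑ J ∈ P, (-1 : ℝ) ^ (J.card + 1) * (if J ⊆ T then 1 else 0) := by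
      rw [← Finset.sum_attach P (fun J => (-1 : ℝ) ^ (J.card + 1) * (if J ⊆ T then 1 else 0))]
      refine Finset.sum_congr rfl fun I _ => ?_
      rw [hval I.1 (Finset.mem_filter.mp I.2).2]
    have step2 : ∑ J ∈ P, (-1 : ℝ) ^ (J.card + 1) * (if J ⊆ T then 1 else 0)
        = ∑ J ∈ T.powerset.filter Finset.Nonempty, (-1 : ℝ) ^ (J.card + 1) := by
      simp only [mul_ite, mul_one, mul_zero]
      rw [← Finset.sum_filter]
      congr 1
      ext J
      simp only [hP, Finset.mem_filter, Finset.mem_powerset]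
      constructor
      · rintro ⟨⟨-, h2⟩, h3⟩; exact ⟨h3, h2⟩
      · rintro ⟨h1, h2⟩; exact ⟨⟨Finset.subset_univ _, h2⟩, h1⟩
    have step3 : ∑ J ∈ T.powerset.filter Finset.Nonempty, (-1 : ℝ) ^ (J.card + 1)
        = 1 - (if T = ∅ then 1 else 0) := by
      have hsplit := Finset.sum_filter_add_sum_filter_not T.powerset Finset.Nonempty
        (fun J => (-1 : ℝ) ^ (J.card + 1))
      have hnot : T.powerset.filter (fun J => ¬ J.Nonempty) = {∅} := by
        ext J
        simp only [Finset.mem_filter, Finset.mem_powerset,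
          Finset.not_nonempty_iff_eq_empty, Finset.mem_singleton]
        constructor
        · rintro ⟨-, h⟩; exact h
        · rintro rfl; exact ⟨Finset.empty_subset T, rfl⟩
      have htot : ∑ J ∈ T.powerset, (-1 : ℝ) ^ (J.card + 1)
          = -(if T = ∅ then 1 else 0) := by
        rw [← sum_pow_real T, ← Finset.sum_neg_distrib]
        refine Finset.sum_congr rfl fun J _ => ?_
        ring
      have h2 : ∑ J ∈ T.powerset.filter (fun J => ¬ J.Nonempty),
          (-1 : ℝ) ^ (J.card + 1) = -1 := by
        rw [hnot]; simp
      rw [h2, htot] at hsplit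
      linarith
    rw [step1, step2, step3]
    by_cases hT0 : T = ∅
    · rw [if_pos hT0]
      norm_num
      exact uniG_nonneg S _
    · rw [if_neg hT0]
      obtain ⟨i, hi⟩ := Finset.nonempty_iff_ne_empty.mpr hT0
      have hSi : S ⊆ A i := (Finset.mem_filter.mp hi).2
      unfold uniG
      rw [if_pos ⟨le_trans hSi (Finset.le_sup (Finset.mem_univ i)), hS⟩]
      norm_num
  · have : uniG S = fun _ => 0 := by
      funext A
      unfold uniG
      rw [if_neg (fun h => hS h.2)]
    rw [this]
    simp

lemma tm_add {N : Type*} [DecidableEq N] {v w : Finset N → ℝ}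
    (hv : TotallyMonotone v) (hw : TotallyMonotone w) : TotallyMonotone (v + w) := by
  intro k hk A
  have h1 := hv k hk A
  have h2 := hw k hk A
  have : ∑ I ∈ ((univ : Finset (Fin k)).powerset.filter Finset.Nonempty).attach,
        (-1 : ℝ) ^ (I.1.card + 1) * (v + w) (I.1.inf' (Finset.mem_filter.mp I.2).2 A)
      = (∑ I ∈ ((univ : Finset (Fin k)).powerset.filter Finset.Nonempty).attach,
        (-1 : ℝ) ^ (I.1.card + 1) * v (I.1.inf' (Finset.mem_filter.mp I.2).2 A))
      + ∑ I ∈ ((univ : Finset (Fin k)).powerset.filter Finset.Nonempty).attach,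
        (-1 : ℝ) ^ (I.1.card + 1) * w (I.1.inf' (Finset.mem_filter.mp I.2).2 A) := by
    rw [← Finset.sum_add_distrib]
    refine Finset.sum_congr rfl fun I _ => ?_
    simp [Pi.add_apply]; ring
  rw [this]
  exact add_le_add h1 h2

lemma tm_smul {N : Type*} [DecidableEq N] {v : Finset N → ℝ} {c : ℝ}
    (hc : 0 ≤ c) (hv : TotallyMonotone v) : TotallyMonotone (c • v) := by
  intro k hk A
  have h1 := hv k hk A
  have : ∑ I ∈ ((univ : Finset (Fin k)).powerset.filter Finset.Nonempty).attach,
        (-1 : ℝ) ^ (I.1.card + 1) * (c • v) (I.1.inf' (Finset.mem_filter.mp I.2).2 A)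
      = c * ∑ I ∈ ((univ : Finset (Fin k)).powerset.filter Finset.Nonempty).attach,
        (-1 : ℝ) ^ (I.1.card + 1) * v (I.1.inf' (Finset.mem_filter.mp I.2).2 A) := by
    rw [Finset.mul_sum]
    refine Finset.sum_congr rfl fun I _ => ?_
    simp [Pi.smul_apply, smul_eq_mul]; ring
  rw [this]
  calc c * _ ≤ c * v (univ.sup A) := mul_le_mul_of_nonneg_left h1 hc
  _ = (c • v) (univ.sup A) := by simp [Pi.smul_apply, smul_eq_mul]

lemma tm_zero {N : Type*} [DecidableEq N] : TotallyMonotone (0 : Finset N → ℝ) := by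
  intro k hk A
  simp

lemma tm_sum {N : Type*} [DecidableEq N] {ι : Type*} (s : Finset ι)
    (f : ι → Finset N → ℝ) (h : ∀ i ∈ s, TotallyMonotone (f i)) :
    TotallyMonotone (∑ i ∈ s, f i) :=
  Finset.sum_induction f TotallyMonotone (fun _ _ => tm_add) tm_zero h

/-- the inner inclusion-exclusion sum -/
lemma innerIE_sum {N : Type*} [DecidableEq N] (B A : Finset N) (hBA : B ⊆ A) :
    ∑ S ∈ A.powerset.filter (fun S => B ⊆ S), (-1 : ℝ) ^ (S.card - B.card)
      = if A = B then 1 else 0 := by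
  classical
  have himg : A.powerset.filter (fun S => B ⊆ S)
      = (A \ B).powerset.image (fun T => B ∪ T) := by
    ext S
    simp only [Finset.mem_filter, Finset.mem_powerset, Finset.mem_image]
    constructor
    · rintro ⟨h1, h2⟩
      exact ⟨S \ B, by
        constructor
        · exact Finset.sdiff_subset_sdiff h1 le_rfl
        · rw [Finset.union_sdiff_of_subset h2]⟩
    · rintro ⟨T, hT, rfl⟩
      exact ⟨Finset.union_subset hBA (le_trans hT (Finset.sdiff_subset)), Finset.subset_union_left⟩
  rw [himg, Finset.sum_image]
  · have : ∀ T ∈ (A \ B).powerset, (-1 : ℝ) ^ ((B ∪ T).card - B.card) = (-1 : ℝ) ^ T.card := by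
      intro T hT
      have hd : Disjoint B T := Finset.disjoint_of_subset_right (Finset.mem_powerset.mp hT)
        Finset.disjoint_sdiff
      rw [Finset.card_union_of_disjoint hd]
      congr 1
      omega
    rw [Finset.sum_congr rfl this, sum_pow_real]
    by_cases h : A = B
    · rw [if_pos h, if_pos (by rw [h]; exact Finset.sdiff_self B)]
    · rw [if_neg h, if_neg]
      intro hc
      exact h (le_antisymm (Finset.sdiff_eq_empty_iff_subset.mp hc) hBA)
  · intro T1 h1 T2 h2 he
    have hd1 : Disjoint B T1 := Finset.disjoint_of_subset_right (Finset.mem_powerset.mp h1)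
      Finset.disjoint_sdiff
    have hd2 : Disjoint B T2 := Finset.disjoint_of_subset_right (Finset.mem_powerset.mp h2)
      Finset.disjoint_sdiff
    have : (B ∪ T1) \ B = (B ∪ T2) \ B := by simp only at he; rw [he]
    rwa [Finset.union_sdiff_cancel_left hd1, Finset.union_sdiff_cancel_left hd2] at this

/-- Möbius inversion -/
lemma mob_sum {N : Type*} [DecidableEq N] (v : Finset N → ℝ) (A : Finset N) :
    ∑ S ∈ A.powerset, mobG v S = v A := by
  classical
  unfold mobG
  rw [Finset.sum_comm' (s' := fun B => A.powerset.filter (fun S => B ⊆ S))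
    (t' := A.powerset) (h := ?_)]
  · have : ∀ B ∈ A.powerset,
        ∑ S ∈ A.powerset.filter (fun S => B ⊆ S), (-1 : ℝ) ^ (S.card - B.card) * v B
        = (if A = B then 1 else 0) * v B := by
      intro B hB
      rw [← Finset.sum_mul, innerIE_sum B A (Finset.mem_powerset.mp hB)]
    rw [Finset.sum_congr rfl this]
    simp only [ite_mul, one_mul, zero_mul]
    rw [Finset.sum_ite_eq (A.powerset) A v]
    rw [if_pos (Finset.mem_powerset.mpr le_rfl)]
  · intro S B
    simp only [Finset.mem_powerset, Finset.mem_filter]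
    constructor
    · rintro ⟨h1, h2⟩
      exact ⟨⟨h1, h2⟩, le_trans h2 h1⟩
    · rintro ⟨⟨h1, h2⟩, h3⟩
      exact ⟨h1, h2⟩

/-- decomposition into difference of nonneg totally monotone games -/
lemma decomp {N : Type*} [Fintype N] [DecidableEq N] (v : Finset N → ℝ) (hv : v ∅ = 0) :
    ∃ u w : Finset N → ℝ, u ∅ = 0 ∧ w ∅ = 0 ∧ TotallyMonotone u ∧ TotallyMonotone w ∧
      (∀ A, 0 ≤ u A) ∧ (∀ A, 0 ≤ w A) ∧ v = u - w := by
  classical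
  set u : Finset N → ℝ :=
    ∑ S ∈ (univ : Finset N).powerset, (max (mobG v S) 0) • uniG S with hu
  set w : Finset N → ℝ :=
    ∑ S ∈ (univ : Finset N).powerset, (max (-(mobG v S)) 0) • uniG S with hw
  have huA : ∀ A, u A = ∑ S ∈ (univ : Finset N).powerset, max (mobG v S) 0 * uniG S A := by
    intro A
    rw [hu, Finset.sum_apply]
    rfl
  have hwA : ∀ A, w A = ∑ S ∈ (univ : Finset N).powerset, max (-(mobG v S)) 0 * uniG S A := by
    intro A
    rw [hw, Finset.sum_apply]
    rfl
  refine ⟨u, w, ?_, ?_, ?_, ?_, ?_, ?_, ?_⟩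
  · rw [huA]
    refine Finset.sum_eq_zero fun S _ => ?_
    rw [uniG_empty, mul_zero]
  · rw [hwA]
    refine Finset.sum_eq_zero fun S _ => ?_
    rw [uniG_empty, mul_zero]
  · exact tm_sum _ _ fun S _ => tm_smul (le_max_right _ _) (uniG_tm S)
  · exact tm_sum _ _ fun S _ => tm_smul (le_max_right _ _) (uniG_tm S)
  · intro A
    rw [huA]
    exact Finset.sum_nonneg fun S _ => mul_nonneg (le_max_right _ _) (uniG_nonneg S A)
  · intro A
    rw [hwA]
    exact Finset.sum_nonneg fun S _ => mul_nonneg (le_max_right _ _) (uniG_nonneg S A)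
  · funext A
    rw [Pi.sub_apply, huA, hwA, ← Finset.sum_sub_distrib]
    have : ∀ S ∈ (univ : Finset N).powerset,
        max (mobG v S) 0 * uniG S A - max (-(mobG v S)) 0 * uniG S A
        = mobG v S * uniG S A := by
      intro S _
      have : max (mobG v S) 0 - max (-(mobG v S)) 0 = mobG v S := by
        rcases le_total (mobG v S) 0 with h | h
        · rw [max_eq_right h, max_eq_left (by linarith)]; ring
        · rw [max_eq_left h, max_eq_right (by linarith)]; ring
      rw [← sub_mul, this]
    rw [Finset.sum_congr rfl this]
    have : ∀ S ∈ (univ : Finset N).powerset,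
        mobG v S * uniG S A = if S ⊆ A ∧ S.Nonempty then mobG v S else 0 := by
      intro S _
      unfold uniG
      split <;> ring
    rw [Finset.sum_congr rfl this, ← Finset.sum_filter]
    have hfe : (univ : Finset N).powerset.filter (fun S => S ⊆ A ∧ S.Nonempty)
        = A.powerset.filter Finset.Nonempty := by
      ext S
      simp only [Finset.mem_filter, Finset.mem_powerset]
      exact ⟨fun ⟨_, h2, h3⟩ => ⟨h2, h3⟩, fun ⟨h1, h2⟩ => ⟨Finset.subset_univ _, h1, h2⟩⟩
    rw [hfe]
    have hsplit := Finset.sum_filter_add_sum_filter_not A.powerset Finset.Nonempty (mobG v)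
    have hnot : A.powerset.filter (fun J => ¬ J.Nonempty) = {∅} := by
      ext J
      simp only [Finset.mem_filter, Finset.mem_powerset,
        Finset.not_nonempty_iff_eq_empty, Finset.mem_singleton]
      constructor
      · rintro ⟨-, h⟩; exact h
      · rintro rfl; exact ⟨Finset.empty_subset A, rfl⟩
    have hempty : mobG v ∅ = 0 := by
      unfold mobG
      simp [hv]
    rw [hnot, Finset.sum_singleton, hempty, add_zero] at hsplit
    rw [hsplit, mob_sum]

/-- additive monotone real functions are linear -/
lemma additive_monotone_linear (g : ℝ → ℝ) (ha : ∀ s t, g (s + t) = g s + g t)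
    (hm : Monotone g) (c : ℝ) : g c = c * g 1 := by
  have h0 : g 0 = 0 := by
    have := ha 0 0
    simp at this
    linarith
  set F : ℝ →+ ℝ := AddMonoidHom.mk' g (fun a b => ha a b) with hF
  have hq : ∀ q : ℚ, g (q : ℝ) = q * g 1 := by
    intro q
    have := map_rat_smul F q (1 : ℝ)
    simp only [Rat.smul_def, mul_one] at this
    simpa [hF, smul_eq_mul] using this
  have hg1 : 0 ≤ g 1 := by
    have := hm (zero_le_one (α := ℝ))
    rwa [h0] at this
  have key : ∀ ε : ℝ, 0 < ε → g c ≤ c * g 1 + ε ∧ c * g 1 ≤ g c + ε := by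
    intro ε hε
    set δ := ε / (g 1 + 1) with hδdef
    have hg1' : (0:ℝ) < g 1 + 1 := by linarith
    have hδ : 0 < δ := div_pos hε hg1'
    have hδg : δ * (g 1 + 1) = ε := div_mul_cancel₀ ε (ne_of_gt hg1')
    have hδg1 : δ * g 1 ≤ ε := by nlinarith
    constructor
    · obtain ⟨q, hq1, hq2⟩ := exists_rat_btwn (lt_add_of_pos_right c hδ)
      have h1 : g c ≤ g q := hm hq1.le
      rw [hq q] at h1
      nlinarith
    · obtain ⟨q, hq1, hq2⟩ := exists_rat_btwn (sub_lt_self c hδ)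
      have h1 : g (q : ℝ) ≤ g c := hm hq2.le
      rw [hq q] at h1
      nlinarith
  have h1 : g c ≤ c * g 1 := le_of_forall_pos_le_add fun ε hε => (key ε hε).1
  have h2 : c * g 1 ≤ g c := le_of_forall_pos_le_add fun ε hε => (key ε hε).2
  linarith

theorem stmt15 {N : Type*} [Fintype N] [DecidableEq N]
    (σ : (Finset N → ℝ) → Set (N → ℝ))
    (hne : ∀ v : Finset N → ℝ, v ∅ = 0 → (σ v).Nonempty)
    (hsup : ∀ v w : Finset N → ℝ, v ∅ = 0 → w ∅ = 0 → σ v + σ w ⊆ σ (v + w))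
    (h0 : σ (fun _ => 0) = {0})
    (hpos : ∀ v : Finset N → ℝ, v ∅ = 0 → TotallyMonotone v → (∀ A, 0 ≤ v A) →
      ∀ x ∈ σ v, ∀ i : N, 0 ≤ x i) :
    (∀ v : Finset N → ℝ, v ∅ = 0 → ∃ x : N → ℝ, σ v = {x}) ∧
    (∀ v w : Finset N → ℝ, v ∅ = 0 → w ∅ = 0 → ∀ x y : N → ℝ,
      σ v = {x} → σ w = {y} → σ (v + w) = {x + y}) ∧
    (∀ (c : ℝ) (v : Finset N → ℝ), v ∅ = 0 → ∀ x : N → ℝ,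
      σ v = {x} → σ (fun A => c * v A) = {c • x}) := by
  classical
  -- single-valuedness
  have h1 : ∀ v : Finset N → ℝ, v ∅ = 0 → ∃ x : N → ℝ, σ v = {x} := by
    intro v hv
    have hnv : (-v) ∅ = 0 := by simp [hv]
    obtain ⟨x, hx⟩ := hne v hv
    obtain ⟨y, hy⟩ := hne (-v) hnv
    have hvv : v + (-v) = (fun _ => 0) := by funext A; simp
    have hkey : ∀ x' ∈ σ v, x' = -y := by
      intro x' hx'
      have : x' + y ∈ σ (v + -v) := hsup v (-v) hv hnv (Set.add_mem_add hx' hy)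
      rw [hvv, h0] at this
      have : x' + y = 0 := this
      funext i
      have := congrFun this i
      simp only [Pi.add_apply, Pi.neg_apply, Pi.zero_apply] at this ⊢
      linarith
    refine ⟨-y, ?_⟩
    ext z
    simp only [Set.mem_singleton_iff]
    constructor
    · exact fun hz => hkey z hz
    · rintro rfl
      rwa [← hkey x hx]
  -- a choice function
  obtain ⟨Φ, hΦ⟩ : ∃ Φ : (Finset N → ℝ) → (N → ℝ),
      ∀ v, v ∅ = 0 → σ v = {Φ v} := by
    choose φ hφ using h1
    exact ⟨fun v => if h : v ∅ = 0 then φ v h else 0,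
      fun v h => by simp only [dif_pos h]; exact hφ v h⟩
  have hmem : ∀ v : Finset N → ℝ, v ∅ = 0 → Φ v ∈ σ v := by
    intro v hv; rw [hΦ v hv]; exact rfl
  have hadd : ∀ v w : Finset N → ℝ, v ∅ = 0 → w ∅ = 0 → Φ (v + w) = Φ v + Φ w := by
    intro v w hv hw
    have hvw : (v + w) ∅ = 0 := by simp [hv, hw]
    have : Φ v + Φ w ∈ σ (v + w) :=
      hsup v w hv hw (Set.add_mem_add (hmem v hv) (hmem w hw))
    rw [hΦ (v + w) hvw] at this
    exact this.symm
  have hzero : Φ (fun _ => 0) = 0 := by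
    have h := hΦ (fun _ => 0) rfl
    rw [h0] at h
    exact (Set.singleton_eq_singleton_iff.mp h.symm)
  have hneg : ∀ v : Finset N → ℝ, v ∅ = 0 → Φ (-v) = -Φ v := by
    intro v hv
    have hnv : (-v) ∅ = 0 := by simp [hv]
    have hvv : v + (-v) = (fun _ => 0) := by funext A; simp
    have := hadd v (-v) hv hnv
    rw [hvv, hzero] at this
    have h := this.symm
    funext i
    have := congrFun h i
    simp only [Pi.add_apply, Pi.neg_apply, Pi.zero_apply] at this ⊢
    linarith
  have hposΦ : ∀ v : Finset N → ℝ, v ∅ = 0 → TotallyMonotone v → (∀ A, 0 ≤ v A) →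
      ∀ i, 0 ≤ Φ v i := fun v hv htm hnn i => hpos v hv htm hnn (Φ v) (hmem v hv) i
  -- smul games vanish at ∅
  have hsm : ∀ (c : ℝ) (v : Finset N → ℝ), v ∅ = 0 → (c • v) ∅ = 0 := by
    intro c v hv
    simp [Pi.smul_apply, hv]
  -- cone homogeneity
  have cone : ∀ u : Finset N → ℝ, u ∅ = 0 → TotallyMonotone u → (∀ A, 0 ≤ u A) →
      ∀ c : ℝ, Φ (c • u) = c • Φ u := by
    intro u hu htm hnn c
    funext i
    have gadd : ∀ s t : ℝ, Φ ((s + t) • u) i = Φ (s • u) i + Φ (t • u) i := by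
      intro s t
      rw [add_smul, hadd _ _ (hsm s u hu) (hsm t u hu)]
      rfl
    have gmono : Monotone (fun t : ℝ => Φ (t • u) i) := by
      intro s t hst
      have hts : t • u = (t - s) • u + s • u := by
        rw [← add_smul]; ring_nf
      have hpos' : 0 ≤ Φ ((t - s) • u) i := by
        refine hposΦ _ (hsm _ u hu) (tm_smul (by linarith) htm) (fun A => ?_) i
        simp only [Pi.smul_apply, smul_eq_mul]
        exact mul_nonneg (by linarith) (hnn A)
      have : Φ (t • u) i = Φ ((t - s) • u) i + Φ (s • u) i := by
        rw [hts, hadd _ _ (hsm _ u hu) (hsm s u hu)]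
        rfl
      simp only at this ⊢
      linarith
    have := additive_monotone_linear (fun t => Φ (t • u) i) gadd gmono c
    rw [this, one_smul]
    simp [Pi.smul_apply, smul_eq_mul]
  -- general homogeneity
  have hhom : ∀ (c : ℝ) (v : Finset N → ℝ), v ∅ = 0 → Φ (c • v) = c • Φ v := by
    intro c v hv
    obtain ⟨u, w, hu0, hw0, htu, htw, hnu, hnw, hvw⟩ := decomp v hv
    have hvweq : v + w = u := by rw [hvw]; funext A; simp
    have h1 : Φ (c • v) + Φ (c • w) = Φ (c • u) := by
      rw [← hadd _ _ (hsm c v hv) (hsm c w hw0), ← smul_add, hvweq]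
    have h2 : Φ (c • u) = c • Φ u := cone u hu0 htu hnu c
    have h3 : Φ (c • w) = c • Φ w := cone w hw0 htw hnw c
    have h4 : Φ u = Φ v + Φ w := by rw [← hvweq, hadd v w hv hw0]
    funext i
    have e1 := congrFun h1 i
    have e2 := congrFun h2 i
    have e3 := congrFun h3 i
    have e4 := congrFun h4 i
    simp only [Pi.add_apply, Pi.smul_apply, smul_eq_mul] at e1 e2 e3 e4 ⊢
    have e5 : c * Φ u i = c * Φ v i + c * Φ w i := by rw [e4]; ring
    linarith [e1, e2, e3, e5]
  refine ⟨h1, ?_, ?_⟩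
  · intro v w hv hw x y hx hy
    have hvw : (v + w) ∅ = 0 := by simp [hv, hw]
    have hxΦ : x = Φ v := by
      have := (hΦ v hv).symm.trans hx
      exact (Set.singleton_eq_singleton_iff.mp this).symm
    have hyΦ : y = Φ w := by
      have := (hΦ w hw).symm.trans hy
      exact (Set.singleton_eq_singleton_iff.mp this).symm
    rw [hΦ (v + w) hvw, hadd v w hv hw, hxΦ, hyΦ]
  · intro c v hv x hx
    have hxΦ : x = Φ v := by
      have := (hΦ v hv).symm.trans hx
      exact (Set.singleton_eq_singleton_iff.mp this).symm
    have hcv : (fun A => c * v A) = c • v := rfl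
    rw [hcv, hΦ (c • v) (hsm c v hv), hhom c v hv, hxΦ]
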